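/- For every integer n ≥ 4 and all distinct i, j ∈ {1,…,n}, there are exactly (n−2)!/2 edges of AN_n having one endpoint in the subnetwork AN_n^i and the other endpoint in the subnetwork AN_n^j. -/

import Mathlib

open SimpleGraph

/-- Vertices of the alternating group network: even permutations of `{1,…,n}`
(modeled as permutations of `Fin n` with sign `1`). A permutation `p` is viewed
as the sequence `p₁p₂⋯p_n` where `p_j` (the symbol in position `j`) is `p ⟨j-1,_⟩`. -/
abbrev ANVertex (n : ℕ) : Type := {p : Equiv.Perm (Fin n) // Equiv.Perm.sign p = 1}

/-- The adjacency relation of the `n`-dimensional alternating group network `AN_n`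
(positions are 1-based in the informal description; position `j` is `⟨j-1,_⟩ : Fin n`). -/
def ANAdj (n : ℕ) (p q : Equiv.Perm (Fin n)) : Prop :=
  ∃ hn : 3 ≤ n,
    ((p ⟨0, by omega⟩ = q ⟨1, by omega⟩ ∧ p ⟨1, by omega⟩ = q ⟨2, by omega⟩ ∧
      p ⟨2, by omega⟩ = q ⟨0, by omega⟩ ∧ ∀ j : Fin n, 3 ≤ (j : ℕ) → p j = q j) ∨
     (p ⟨0, by omega⟩ = q ⟨2, by omega⟩ ∧ p ⟨1, by omega⟩ = q ⟨0, by omega⟩ ∧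
      p ⟨2, by omega⟩ = q ⟨1, by omega⟩ ∧ ∀ j : Fin n, 3 ≤ (j : ℕ) → p j = q j) ∨
     (∃ i : Fin n, 3 ≤ (i : ℕ) ∧ p ⟨0, by omega⟩ = q ⟨1, by omega⟩ ∧
      p ⟨1, by omega⟩ = q ⟨0, by omega⟩ ∧ p ⟨2, by omega⟩ = q i ∧ p i = q ⟨2, by omega⟩ ∧
      ∀ j : Fin n, 3 ≤ (j : ℕ) → j ≠ i → p j = q j))

/-- The `n`-dimensional alternating group network `AN_n`. -/
def AN (n : ℕ) : SimpleGraph (ANVertex n) where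
  Adj x y := ANAdj n x.1 y.1
  symm := by
    constructor
    rintro x y ⟨hn, h⟩
    refine ⟨hn, ?_⟩
    rcases h with ⟨h1, h2, h3, h4⟩ | ⟨h1, h2, h3, h4⟩ | ⟨i, hi, h1, h2, h3, h4, h5⟩
    · exact Or.inr (Or.inl ⟨h3.symm, h1.symm, h2.symm, fun j hj => (h4 j hj).symm⟩)
    · exact Or.inl ⟨h2.symm, h3.symm, h1.symm, fun j hj => (h4 j hj).symm⟩
    · exact Or.inr (Or.inr ⟨i, hi, h2.symm, h1.symm, h4.symm, h3.symm,
        fun j hj hji => (h5 j hj hji).symm⟩)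
  loopless := by
    constructor
    rintro x ⟨hn, ⟨h1, -⟩ | ⟨h1, -⟩ | ⟨i, hi, h1, -⟩⟩ <;>
      simpa [Fin.ext_iff] using x.1.injective h1

/-- The `ℓ`-component connectivity `κ_ℓ(G)`: the minimum number of vertices whose
removal from `G` results in a graph with at least `ℓ` connected components or a
graph with fewer than `ℓ` vertices. -/
noncomputable def componentConnectivity {V : Type*} [Fintype V] (G : SimpleGraph V)
    (l : ℕ) : ℕ :=
  sInf {k | ∃ F : Finset V, F.card = k ∧
    (l ≤ Nat.card ((G.induce (↑F : Set V)ᶜ).ConnectedComponent) ∨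
     Fintype.card V - F.card < l)}

lemma card_fix_two {n : ℕ} (a b : Fin n) (hab : a ≠ b) :
    Fintype.card {σ : Equiv.Perm (Fin n) // σ a = a ∧ σ b = b} = Nat.factorial (n - 2) := by
  have e1 : {σ : Equiv.Perm (Fin n) // σ a = a ∧ σ b = b} ≃
      {f : Equiv.Perm (Fin n) // ∀ x, ¬(x ≠ a ∧ x ≠ b) → f x = x} := by
    apply Equiv.subtypeEquivRight
    intro f
    constructor
    · rintro ⟨h1, h2⟩ x hx
      rcases not_and_or.mp hx with h | h
      · rw [not_ne_iff.mp h]; exact h1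
      · rw [not_ne_iff.mp h]; exact h2
    · intro h
      exact ⟨h a (by simp), h b (by simp)⟩
  have e2 := (Equiv.Perm.subtypeEquivSubtypePerm (fun x : Fin n => x ≠ a ∧ x ≠ b)).symm
  have hcard : Fintype.card {x : Fin n // x ≠ a ∧ x ≠ b} = n - 2 := by
    rw [Fintype.card_subtype]
    have : (Finset.univ.filter fun x : Fin n => x ≠ a ∧ x ≠ b) =
        Finset.univ \ {a, b} := by
      ext x; simp [not_or]
    rw [this, Finset.card_sdiff_of_subset (by simp), Finset.card_pair hab]
    simp
  rw [Fintype.card_congr (e1.trans e2), Fintype.card_perm, hcard]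

lemma card_even_two {n : ℕ} (hn : 4 ≤ n) (a b v w : Fin n)
    (ha : 2 ≤ (a : ℕ)) (hb : 2 ≤ (b : ℕ)) (hab : a ≠ b) (hvw : v ≠ w) :
    (Finset.univ.filter fun p : Equiv.Perm (Fin n) =>
      Equiv.Perm.sign p = 1 ∧ p a = v ∧ p b = w).card = Nat.factorial (n - 2) / 2 := by
  set T := Finset.univ.filter fun p : Equiv.Perm (Fin n) => p a = v ∧ p b = w with hTdef
  -- T has (n-2)! elements
  have hcb : Equiv.swap a v b ≠ v := by
    intro h
    exact hab (Equiv.injective _ (h.trans (Equiv.swap_apply_left a v).symm)).symm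
  set p₀ : Equiv.Perm (Fin n) := Equiv.swap (Equiv.swap a v b) w * Equiv.swap a v with hp₀
  have hp₀a : p₀ a = v := by
    simp only [hp₀, Equiv.Perm.mul_apply, Equiv.swap_apply_left]
    exact Equiv.swap_apply_of_ne_of_ne (Ne.symm hcb) hvw
  have hp₀b : p₀ b = w := by
    simp only [hp₀, Equiv.Perm.mul_apply, Equiv.swap_apply_left]
  have hT : T.card = Nat.factorial (n - 2) := by
    have hbij : T.card =
        (Finset.univ.filter fun σ : Equiv.Perm (Fin n) => σ a = a ∧ σ b = b).card := by
      apply Finset.card_bij' (fun p _ => p₀⁻¹ * p) (fun σ _ => p₀ * σ)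
      · intro p hp
        simp only [hTdef, Finset.mem_filter, Finset.mem_univ, true_and] at hp ⊢
        constructor
        · rw [Equiv.Perm.mul_apply, hp.1, ← hp₀a]; simp
        · rw [Equiv.Perm.mul_apply, hp.2, ← hp₀b]; simp
      · intro σ hσ
        simp only [hTdef, Finset.mem_filter, Finset.mem_univ, true_and] at hσ ⊢
        constructor
        · rw [Equiv.Perm.mul_apply, hσ.1, hp₀a]
        · rw [Equiv.Perm.mul_apply, hσ.2, hp₀b]
      · intro p _; simp [mul_assoc]
      · intro σ _; simp [← mul_assoc]
    rw [hbij, ← card_fix_two a b hab, Fintype.card_subtype]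
  -- parity involution
  set s : Equiv.Perm (Fin n) := Equiv.swap ⟨0, by omega⟩ ⟨1, by omega⟩ with hs
  have h01 : (⟨0, by omega⟩ : Fin n) ≠ ⟨1, by omega⟩ := by simp [Fin.ext_iff]
  have hsa : s a = a := Equiv.swap_apply_of_ne_of_ne
    (by simp [Fin.ext_iff]; omega) (by simp [Fin.ext_iff]; omega)
  have hsb : s b = b := Equiv.swap_apply_of_ne_of_ne
    (by simp [Fin.ext_iff]; omega) (by simp [Fin.ext_iff]; omega)
  have hss : s * s = 1 := Equiv.swap_mul_self _ _
  have hsign : Equiv.Perm.sign s = -1 := Equiv.Perm.sign_swap h01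
  have hmemT : ∀ p ∈ T, p * s ∈ T := by
    intro p hp
    simp only [hTdef, Finset.mem_filter, Finset.mem_univ, true_and] at hp ⊢
    rw [Equiv.Perm.mul_apply, Equiv.Perm.mul_apply, hsa, hsb]
    exact hp
  have hsignflip : ∀ p : Equiv.Perm (Fin n),
      Equiv.Perm.sign (p * s) = - Equiv.Perm.sign p := by
    intro p; rw [Equiv.Perm.sign_mul, hsign, mul_neg, mul_one]
  have hcards : (T.filter fun p => Equiv.Perm.sign p = 1).card =
      (T.filter fun p => ¬ Equiv.Perm.sign p = 1).card := by
    apply Finset.card_bij' (fun p _ => p * s) (fun p _ => p * s)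
    · intro p hp
      simp only [Finset.mem_filter] at hp ⊢
      refine ⟨hmemT p hp.1, ?_⟩
      rw [hsignflip, hp.2]; decide
    · intro p hp
      simp only [Finset.mem_filter] at hp ⊢
      refine ⟨hmemT p hp.1, ?_⟩
      rcases Int.units_eq_one_or (Equiv.Perm.sign p) with h | h
      · exact absurd h hp.2
      · rw [hsignflip, h]; decide
    · intro p _; rw [mul_assoc, hss, mul_one]
    · intro p _; rw [mul_assoc, hss, mul_one]
  have hsplit : (T.filter fun p => Equiv.Perm.sign p = 1).card +
      (T.filter fun p => ¬ Equiv.Perm.sign p = 1).card = T.card :=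
    Finset.card_filter_add_card_filter_not
      (s := T) (p := fun p => Equiv.Perm.sign p = 1)
  have hgoal : (Finset.univ.filter fun p : Equiv.Perm (Fin n) =>
      Equiv.Perm.sign p = 1 ∧ p a = v ∧ p b = w) =
      T.filter fun p => Equiv.Perm.sign p = 1 := by
    simp only [hTdef, Finset.filter_filter]
    apply Finset.filter_congr
    intro p _
    tauto
  rw [hgoal]
  omega


set_option maxHeartbeats 400000 in
/-- For every `n ≥ 4` and distinct `i, j`, there are exactly `(n−2)!/2` edges of
`AN_n` with one endpoint in the subnetwork `AN_n^i` and the other in `AN_n^j`. -/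
theorem AN_cross_edges_count (n : ℕ) (hn : 4 ≤ n) (i j : Fin n) (hij : i ≠ j) :
    {e : Sym2 (ANVertex n) | e ∈ (AN n).edgeSet ∧
      ∃ x y : ANVertex n, e = s(x, y) ∧
        x.1 ⟨n - 1, by omega⟩ = i ∧ y.1 ⟨n - 1, by omega⟩ = j}.ncard =
      Nat.factorial (n - 2) / 2 := by
  set z0 : Fin n := ⟨0, by omega⟩ with hz0
  set z1 : Fin n := ⟨1, by omega⟩ with hz1
  set a : Fin n := ⟨2, by omega⟩ with ha
  set b : Fin n := ⟨n - 1, by omega⟩ with hb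
  have hab : a ≠ b := by simp [ha, hb, Fin.ext_iff]; omega
  have h01 : z0 ≠ z1 := by simp [hz0, hz1, Fin.ext_iff]
  obtain ⟨σ₀, hσ⟩ : ∃ σ : Equiv.Perm (Fin n), σ = Equiv.swap z0 z1 * Equiv.swap a b :=
    ⟨_, rfl⟩
  have h0a : z0 ≠ a := by simp [hz0, ha, Fin.ext_iff]
  have h0b : z0 ≠ b := by simp [hz0, hb, Fin.ext_iff]; omega
  have h1a : z1 ≠ a := by simp [hz1, ha, Fin.ext_iff]
  have h1b : z1 ≠ b := by simp [hz1, hb, Fin.ext_iff]; omega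
  have ha0 : a ≠ z0 := h0a.symm
  have ha1 : a ≠ z1 := h1a.symm
  have hb0 : b ≠ z0 := h0b.symm
  have hb1 : b ≠ z1 := h1b.symm
  have hσ0 : σ₀ z0 = z1 := by
    rw [hσ, Equiv.Perm.mul_apply,
      show Equiv.swap a b z0 = z0 from Equiv.swap_apply_of_ne_of_ne h0a h0b,
      Equiv.swap_apply_left]
  have hσ1 : σ₀ z1 = z0 := by
    rw [hσ, Equiv.Perm.mul_apply,
      show Equiv.swap a b z1 = z1 from Equiv.swap_apply_of_ne_of_ne h1a h1b,
      Equiv.swap_apply_right]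
  have hσa : σ₀ a = b := by
    rw [hσ, Equiv.Perm.mul_apply, Equiv.swap_apply_left,
      show Equiv.swap z0 z1 b = b from Equiv.swap_apply_of_ne_of_ne hb0 hb1]
  have hσb : σ₀ b = a := by
    rw [hσ, Equiv.Perm.mul_apply, Equiv.swap_apply_right,
      show Equiv.swap z0 z1 a = a from Equiv.swap_apply_of_ne_of_ne ha0 ha1]
  have hσo : ∀ k : Fin n, k ≠ z0 → k ≠ z1 → k ≠ a → k ≠ b → σ₀ k = k := by
    intro k h0 h1 h2 h3
    rw [hσ, Equiv.Perm.mul_apply,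
      show Equiv.swap a b k = k from Equiv.swap_apply_of_ne_of_ne h2 h3,
      show Equiv.swap z0 z1 k = k from Equiv.swap_apply_of_ne_of_ne h0 h1]
  have hσsign : Equiv.Perm.sign σ₀ = 1 := by
    rw [hσ, Equiv.Perm.sign_mul, Equiv.Perm.sign_swap h01, Equiv.Perm.sign_swap hab]
    decide
  have gsign : ∀ p : ANVertex n, Equiv.Perm.sign (p.1 * σ₀) = 1 := by
    intro p; rw [Equiv.Perm.sign_mul, p.2, hσsign, one_mul]
  obtain ⟨g, hg⟩ : ∃ g : ANVertex n → ANVertex n, ∀ p, (g p).1 = p.1 * σ₀ :=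
    ⟨fun p => ⟨p.1 * σ₀, gsign p⟩, fun p => rfl⟩
  obtain ⟨f, hf⟩ : ∃ f : ANVertex n → Sym2 (ANVertex n), ∀ p, f p = s(p, g p) :=
    ⟨_, fun p => rfl⟩
  obtain ⟨S, hSmem⟩ : ∃ S : Set (ANVertex n),
      ∀ p : ANVertex n, p ∈ S ↔ (p.1 a = j ∧ p.1 b = i) :=
    ⟨{p | p.1 a = j ∧ p.1 b = i}, fun p => Iff.rfl⟩
  have hb3 : 3 ≤ (b : ℕ) := by simp [hb]; omega
  have hgapp : ∀ (p : ANVertex n) (z : Fin n), (g p).1 z = p.1 (σ₀ z) := by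
    intro p z; rw [hg]; rfl
  have key : {e : Sym2 (ANVertex n) | e ∈ (AN n).edgeSet ∧
      ∃ x y : ANVertex n, e = s(x, y) ∧
        x.1 ⟨n - 1, by omega⟩ = i ∧ y.1 ⟨n - 1, by omega⟩ = j} = f '' S := by
    ext e
    constructor
    · rintro ⟨he, x, y, rfl, hx, hy⟩
      have hadj : (AN n).Adj x y := (AN n).mem_edgeSet.mp he
      obtain ⟨h3n, hcase⟩ := hadj
      have hbfix : x.1 b ≠ y.1 b := by rw [hx, hy]; exact hij
      rcases hcase with ⟨-, -, -, h4⟩ | ⟨-, -, -, h4⟩ | ⟨k, hk3, h1, h2, h3, h4, h5⟩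
      · exact absurd (h4 b hb3) hbfix
      · exact absurd (h4 b hb3) hbfix
      · by_cases hkb : k = b
        · subst hkb
          refine ⟨x, (hSmem x).mpr ⟨h3.trans hy, hx⟩, ?_⟩
          have hyx : y = g x := by
            apply Subtype.ext
            apply Equiv.ext
            intro z
            rw [show (g x).1 z = x.1 (σ₀ z) from hgapp x z]
            by_cases e0 : z = z0
            · subst e0; rw [hσ0]; exact h2.symm
            · by_cases e1 : z = z1
              · subst e1; rw [hσ1]; exact h1.symm
              · by_cases e2 : z = a
                · subst e2; rw [hσa]; exact h4.symm
                · by_cases e3 : z = b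
                  · subst e3; rw [hσb]; exact h3.symm
                  · rw [hσo z e0 e1 e2 e3]
                    have hz3 : 3 ≤ (z : ℕ) := by
                      simp [hz0, hz1, ha, Fin.ext_iff] at e0 e1 e2
                      omega
                    exact (h5 z hz3 e3).symm
          rw [hf, hyx]
        · exact absurd (h5 b hb3 (fun h => hkb h.symm)) hbfix
    · rintro ⟨p, hp, rfl⟩
      rw [hSmem] at hp
      have hgpb : (g p).1 b = j := by rw [hgapp, hσb]; exact hp.1
      have hadj : (AN n).Adj p (g p) := by
        refine ⟨by omega, Or.inr (Or.inr ⟨b, hb3, ?_, ?_, ?_, ?_, ?_⟩)⟩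
        · show p.1 z0 = (g p).1 z1
          rw [hgapp, hσ1]
        · show p.1 z1 = (g p).1 z0
          rw [hgapp, hσ0]
        · show p.1 a = (g p).1 b
          rw [hgapp, hσb]
        · show p.1 b = (g p).1 a
          rw [hgapp, hσa]
        · intro k hk3 hkb
          show p.1 k = (g p).1 k
          rw [hgapp, hσo k (by simp [hz0, Fin.ext_iff]; omega)
            (by simp [hz1, Fin.ext_iff]; omega) (by simp [ha, Fin.ext_iff]; omega) hkb]
      exact ⟨Set.mem_of_eq_of_mem (hf p) ((AN n).mem_edgeSet.mpr hadj),
        p, g p, hf p, hp.2, hgpb⟩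
  rw [key]
  have hinj : Set.InjOn f S := by
    intro p hp p' hp' hpp'
    rw [hf p, hf p'] at hpp'
    rw [hSmem] at hp hp'
    simp only [Sym2.eq, Sym2.rel_iff', Prod.mk.injEq, Prod.swap_prod_mk] at hpp'
    rcases hpp' with ⟨h, -⟩ | ⟨h, -⟩
    · exact h
    · exfalso
      have : p.1 b = (g p').1 b := by rw [h]
      rw [hgapp, hσb, hp.2, hp'.1] at this
      exact hij this
  rw [Set.ncard_image_of_injOn hinj]
  have hSeq : S = {p : ANVertex n | p.1 a = j ∧ p.1 b = i} := Set.ext hSmem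
  rw [hSeq]
  have hcount := card_even_two hn a b j i (by simp [ha]) (by simp [hb]; omega) hab
    (fun h => hij h.symm)
  have h1 : ({p : ANVertex n | p.1 a = j ∧ p.1 b = i}).ncard
      = Nat.card {x : ANVertex n // x.1 a = j ∧ x.1 b = i} :=
    (Nat.card_coe_set_eq _).symm
  have h2 : Nat.card {x : ANVertex n // x.1 a = j ∧ x.1 b = i}
      = Nat.card {p : Equiv.Perm (Fin n) //
          Equiv.Perm.sign p = 1 ∧ (p a = j ∧ p b = i)} :=
    Nat.card_congr (Equiv.subtypeSubtypeEquivSubtypeInter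
      (fun p : Equiv.Perm (Fin n) => Equiv.Perm.sign p = 1)
      (fun p : Equiv.Perm (Fin n) => p a = j ∧ p b = i))
  have h3 : Nat.card {p : Equiv.Perm (Fin n) //
        Equiv.Perm.sign p = 1 ∧ (p a = j ∧ p b = i)}
      = (Finset.univ.filter fun p : Equiv.Perm (Fin n) =>
          Equiv.Perm.sign p = 1 ∧ p a = j ∧ p b = i).card := by
    rw [Nat.card_eq_fintype_card, Fintype.card_subtype]
  rw [h1, h2, h3, hcount]
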